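/- First-order Trotter error bound: for Hermitian matrices A, B and t ≥ 0, ‖exp(−i(A+B)t) − exp(−iAt)·exp(−iBt)‖ ≤ (t²/2)·‖[A,B]‖ in the operator norm. -/

import Mathlib

open Matrix NormedSpace
open scoped Matrix.Norms.L2Operator

namespace TrotterAux

variable {n : ℕ}

local notation "Mat" => Matrix (Fin n) (Fin n) ℂ

/-- `E M s = exp(-i s M)`. -/
noncomputable def E (M : Mat) (s : ℝ) : Mat :=
  NormedSpace.exp ((-(Complex.I * (s : ℂ))) • M)

lemma smul_eq' (M : Mat) (s : ℝ) :
    (-(Complex.I * (s : ℂ))) • M = s • ((-Complex.I) • M) := by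
  rw [← smul_assoc]
  congr 1
  simp [smul_eq_mul]
  ring

lemma hasDerivAt_E (M : Mat) (s : ℝ) :
    HasDerivAt (fun u : ℝ => E M u) (E M s * ((-Complex.I) • M)) s := by
  have h := hasDerivAt_exp_smul_const (𝕂 := ℝ) ((-Complex.I) • M) s
  simpa only [E, smul_eq'] using h

lemma hasDerivAt_E' (M : Mat) (s : ℝ) :
    HasDerivAt (fun u : ℝ => E M u) (((-Complex.I) • M) * E M s) s := by
  have h := hasDerivAt_exp_smul_const' (𝕂 := ℝ) ((-Complex.I) • M) s
  simpa only [E, smul_eq'] using h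

lemma E_comm (M : Mat) (s : ℝ) :
    E M s * ((-Complex.I) • M) = ((-Complex.I) • M) * E M s :=
  (hasDerivAt_E M s).unique (hasDerivAt_E' M s)

lemma continuous_E (M : Mat) : Continuous (fun s : ℝ => E M s) :=
  continuous_iff_continuousAt.2 fun s => (hasDerivAt_E M s).continuousAt

lemma E_zero (M : Mat) : E M 0 = 1 := by
  simp [E, exp_zero]

lemma E_neg_mul (M : Mat) (s : ℝ) : E M s * E M (-s) = 1 := by
  have h : (-(Complex.I * ((-s : ℝ) : ℂ))) • M = -((-(Complex.I * (s : ℂ))) • M) := by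
    rw [← neg_smul]; congr 1; push_cast; ring
  letI : NormedAlgebra ℚ Mat := NormedAlgebra.restrictScalars ℚ ℂ Mat
  rw [E, E, h, ← NormedSpace.exp_add_of_commute (Commute.neg_right (Commute.refl _)), add_neg_cancel,
    exp_zero]

lemma mem_unitary (M : Mat) (hM : M.IsHermitian) (s : ℝ) :
    E M s ∈ unitary Mat := by
  letI : NormedAlgebra ℚ Mat := NormedAlgebra.restrictScalars ℚ ℂ Mat
  apply exp_mem_unitary_of_mem_skewAdjoint
  rw [skewAdjoint.mem_iff, star_smul]
  have hsM : star M = M := hM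
  rw [hsM, ← neg_smul]
  congr 1
  simp [Complex.ext_iff]

lemma norm_unit_mul (M : Mat) (hM : M.IsHermitian) (s : ℝ) (X : Mat) :
    ‖E M s * X‖ = ‖X‖ :=
  CStarRing.norm_mem_unitary_mul X (mem_unitary M hM s)

lemma norm_mul_unit (M : Mat) (hM : M.IsHermitian) (s : ℝ) (X : Mat) :
    ‖X * E M s‖ = ‖X‖ := by
  have := CStarRing.norm_mul_coe_unitary X ⟨E M s, mem_unitary M hM s⟩
  simpa using this

/-- Stage 1: `‖B·e^{-isA} − e^{-isA}·B‖ ≤ s‖[A,B]‖`. -/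
lemma stage1 (A B : Mat) (hA : A.IsHermitian) (s : ℝ) (hs : 0 ≤ s) :
    ‖B * E A s - E A s * B‖ ≤ s * ‖A * B - B * A‖ := by
  set K : Mat := A * B - B * A with hK
  set k : ℝ → Mat := fun u => E A (-u) * B * E A u with hk
  have hmid : B * ((-Complex.I) • A) - ((-Complex.I) • A) * B = Complex.I • K := by
    rw [hK, mul_smul_comm, smul_mul_assoc, ← smul_sub, neg_smul, ← smul_neg, neg_sub]
  have hconj : ∀ u : ℝ, HasDerivAt k (E A (-u) * (Complex.I • K) * E A u) u := by
    intro u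
    have h1 : HasDerivAt (fun v : ℝ => E A (-v)) (-(((-Complex.I) • A) * E A (-u))) u := by
      have := (hasDerivAt_E' A (-u)).scomp u ((hasDerivAt_id u).neg)
      simpa [Function.comp_def] using this
    have h := (h1.mul_const B).mul (hasDerivAt_E A u)
    refine h.congr_deriv ?_
    rw [E_comm A u, ← E_comm A (-u), ← hmid]
    set J := (-Complex.I) • A
    noncomm_ring
  have hcont : Continuous fun u : ℝ => E A (-u) * (Complex.I • K) * E A u := by
    exact ((((continuous_E A).comp continuous_neg).mul continuous_const).mul (continuous_E A))
  have hftc : ∫ u in (0:ℝ)..s, E A (-u) * (Complex.I • K) * E A u = k s - k 0 :=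
    intervalIntegral.integral_eq_sub_of_hasDerivAt (fun u _ => hconj u)
      (hcont.intervalIntegrable _ _)
  have hbd : ‖k s - k 0‖ ≤ ‖K‖ * |s - 0| := by
    rw [← hftc]
    apply intervalIntegral.norm_integral_le_of_norm_le_const
    intro u _
    rw [norm_mul_unit A hA, norm_unit_mul A hA, norm_smul, Complex.norm_I, one_mul]
  have hks : B * E A s - E A s * B = E A s * (k s - k 0) := by
    simp only [hk, neg_zero, E_zero, one_mul, mul_one]
    rw [mul_sub, ← mul_assoc, ← mul_assoc, E_neg_mul, one_mul]
  calc ‖B * E A s - E A s * B‖ = ‖k s - k 0‖ := by rw [hks, norm_unit_mul A hA]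
    _ ≤ ‖K‖ * |s - 0| := hbd
    _ = s * ‖K‖ := by rw [sub_zero, abs_of_nonneg hs, mul_comm]

end TrotterAux

open TrotterAux

/-- First-order Trotter error bound: for Hermitian `A, B` and `t ≥ 0`,
`‖exp(−i(A+B)t) − exp(−iAt)·exp(−iBt)‖ ≤ (t²/2)·‖[A,B]‖` in the operator (spectral) norm. -/
theorem trotter_first_order_error_bound
    {n : ℕ} (A B : Matrix (Fin n) (Fin n) ℂ)
    (hA : A.IsHermitian) (hB : B.IsHermitian) (t : ℝ) (ht : 0 ≤ t) :
    ‖NormedSpace.exp ((-(Complex.I * (t : ℂ))) • (A + B)) -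
        NormedSpace.exp ((-(Complex.I * (t : ℂ))) • A) *
          NormedSpace.exp ((-(Complex.I * (t : ℂ))) • B)‖
      ≤ (t ^ 2 / 2) * ‖A * B - B * A‖ := by
  change ‖E (A + B) t - E A t * E B t‖ ≤ _
  set C : Matrix (Fin n) (Fin n) ℂ := A + B with hCdef
  have hC : C.IsHermitian := hA.add hB
  set K : Matrix (Fin n) (Fin n) ℂ := A * B - B * A with hK
  set D : ℝ → Matrix (Fin n) (Fin n) ℂ := fun s =>
    E C (t - s) * (Complex.I • (B * E A s - E A s * B)) * E B s with hD
  set f : ℝ → Matrix (Fin n) (Fin n) ℂ := fun s => E C (t - s) * (E A s * E B s) with hf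
  have hder : ∀ s : ℝ, HasDerivAt f (D s) s := by
    intro s
    have h0 : HasDerivAt (fun u : ℝ => E C (t - u)) (-(((-Complex.I) • C) * E C (t - s))) s := by
      have := (hasDerivAt_E' C (t - s)).scomp s ((hasDerivAt_id s).const_sub t)
      simpa [Function.comp_def] using this
    have h := h0.mul ((hasDerivAt_E A s).mul (hasDerivAt_E B s))
    refine h.congr_deriv ?_
    simp only [hD, Pi.mul_apply]
    have key : Complex.I • (B * E A s - E A s * B)
        = (Complex.I • B) * E A s - E A s * (Complex.I • B) := by
      rw [smul_sub, smul_mul_assoc, mul_smul_comm]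
    have hsplit : (-Complex.I) • C = -(Complex.I • A) - Complex.I • B := by
      rw [hCdef, smul_add, neg_smul, neg_smul]; abel
    have hAc : E A s * ((-Complex.I) • A) = -(Complex.I • A) * E A s := by
      rw [E_comm A s, neg_smul]
    have hBc : E B s * ((-Complex.I) • B) = -(Complex.I • B) * E B s := by
      rw [E_comm B s, neg_smul]
    rw [key, hAc, hBc, ← E_comm C (t - s), hsplit]
    set IA := Complex.I • A
    set IB := Complex.I • B
    noncomm_ring
  have hcontD : Continuous D := by
    have c1 : Continuous fun s : ℝ => E C (t - s) :=
      (continuous_E C).comp (continuous_const.sub continuous_id)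
    have c2 : Continuous fun s : ℝ => Complex.I • (B * E A s - E A s * B) :=
      ((continuous_const.mul (continuous_E A)).sub
        ((continuous_E A).mul continuous_const)).const_smul Complex.I
    exact (c1.mul c2).mul (continuous_E B)
  have hftc : ∫ s in (0:ℝ)..t, D s = f t - f 0 :=
    intervalIntegral.integral_eq_sub_of_hasDerivAt (fun s _ => hder s)
      (hcontD.intervalIntegrable _ _)
  have hval : E C t - E A t * E B t = -(∫ s in (0:ℝ)..t, D s) := by
    rw [hftc]
    simp only [hf, sub_self, sub_zero, E_zero, one_mul, mul_one]
    abel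
  rw [show E (A + B) t = E C t from rfl, hval, norm_neg]
  have hbd : ∀ s ∈ Set.uIoc (0:ℝ) t, ‖D s‖ ≤ s * ‖K‖ := by
    intro s hs
    rw [Set.uIoc_of_le ht] at hs
    have hs0 : 0 ≤ s := hs.1.le
    rw [hD]
    calc ‖E C (t - s) * (Complex.I • (B * E A s - E A s * B)) * E B s‖
        = ‖B * E A s - E A s * B‖ := by
          rw [norm_mul_unit B hB, norm_unit_mul C hC, norm_smul, Complex.norm_I, one_mul]
      _ ≤ s * ‖K‖ := stage1 A B hA s hs0
  have hgint : IntervalIntegrable (fun s : ℝ => s * ‖K‖) MeasureTheory.volume 0 t :=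
    (continuous_id.mul continuous_const).intervalIntegrable _ _
  have := intervalIntegral.norm_integral_le_of_norm_le (μ := MeasureTheory.volume)
    (g := fun s => s * ‖K‖) (f := D) ht ?_ hgint
  · refine this.trans (le_of_eq ?_)
    rw [intervalIntegral.integral_mul_const, integral_id]
    have h2 : ((t ^ 2 - 0 ^ 2) / 2 : ℝ) = t ^ 2 / 2 := by norm_num
    rw [h2]
  · exact Filter.Eventually.of_forall (fun s hs => hbd s (by rwa [Set.uIoc_of_le ht]))
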